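/- arXiv:1306.1091 — 7 statements merged into one kernel-verified Lean document; each statement's English description precedes it below -/
import Mathlib

section
/- Let 𝒳 and ℋ be standard Borel spaces, let f be a Markov kernel from ℋ × 𝒳 to ℋ and g a Markov kernel from ℋ to 𝒳. Let μ₀ be a probability measure on ℋ × 𝒳 (the law of (H₀, X₀)), and let μ' be the probability measure on ℋ × 𝒳 obtained by μ' = μ₀.bind (fun (h, x) => (f (h, x)).map (fun h₁ => (h₁, x))) (the law of (H₁, X₀)). Assume: (i) μ' and μ₀ have the same 𝒳-marginal and the disintegration of μ' over its 𝒳-marginal agrees almost everywhere with the disintegration of μ₀ over its 𝒳-marginal (i.e., P(H₁ | X₀) = P(H₀ | X₀)); (ii) the disintegration of μ' over its ℋ-marginal agrees almost everywhere with g (i.e., P(X₀ | H₁ = h) = g(h)). Then μ₀ is invariant under the GSN transition kernel T : ℋ × 𝒳 → ℋ × 𝒳 defined by T (h, x) = (f (h, x)).bind (fun h' => (g h').map (fun x' => (h', x'))); that is, μ₀.bind T = μ₀. -/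
open MeasureTheory ProbabilityTheory

private lemma bind_map_aux {α β γ : Type*} [MeasurableSpace α] [MeasurableSpace β]
    [MeasurableSpace γ] (μ : Measure α) {i : α → β} (hi : Measurable i)
    {K : β → Measure γ} (hK : Measurable K) :
    (μ.map i).bind K = μ.bind (K ∘ i) := by
  ext s hs
  rw [Measure.bind_apply hs hK.aemeasurable, Measure.bind_apply hs (hK.comp hi).aemeasurable,
    MeasureTheory.lintegral_map (f := fun b => (K b) s)
      ((Measure.measurable_coe hs).comp hK) hi]
  rfl

private lemma compProd_eq_bind_aux {α β : Type*} [MeasurableSpace α] [MeasurableSpace β]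
    (μ : Measure α) [SFinite μ] (κ : Kernel α β) [IsSFiniteKernel κ] :
    μ ⊗ₘ κ = μ.bind (fun a => (κ a).map (fun b => (a, b))) := by
  have hm : Measurable (fun a => (κ a).map (fun b => (a, b))) := by
    rw [Measure.measurable_measure]
    intro s hs
    simp_rw [Measure.map_apply measurable_prodMk_left hs]
    exact Kernel.measurable_kernel_prodMk_left hs
  ext s hs
  rw [Measure.compProd_apply hs, Measure.bind_apply hs hm.aemeasurable]
  refine lintegral_congr fun a => ?_
  rw [Measure.map_apply measurable_prodMk_left hs]

/-- **Theorem 2 of the paper (invariance of the GSN Markov chain).**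
Let 𝒳 and ℋ be standard Borel spaces, `f` a Markov kernel from `ℋ × 𝒳` to `ℋ`,
`g` a Markov kernel from `ℋ` to `𝒳`, `μ₀` the law of `(H₀, X₀)` and
`μ' = law (H₁, X₀)` obtained by applying `f`. If `P(H₁ | X₀) = P(H₀ | X₀)` and
`P(X₀ | H₁ = h) = g h`, then `μ₀` is invariant under the GSN transition kernel
`T (h, x) = (f (h, x)).bind (fun h' => (g h').map (fun x' => (h', x')))`. -/
theorem gsn_stationary
    {H X : Type*}
    [MeasurableSpace H] [StandardBorelSpace H] [Nonempty H]
    [MeasurableSpace X] [StandardBorelSpace X] [Nonempty X]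
    (f : Kernel (H × X) H) [IsMarkovKernel f]
    (g : Kernel H X) [IsMarkovKernel g]
    (μ₀ : Measure (H × X)) [IsProbabilityMeasure μ₀]
    (μ' : Measure (H × X)) [IsProbabilityMeasure μ']
    (hμ' : μ' = μ₀.bind (fun p => (f p).map (fun h₁ => (h₁, p.2))))
    -- (i) same 𝒳-marginal and P(H₁ | X₀) = P(H₀ | X₀)
    (hsnd : μ'.snd = μ₀.snd)
    (hcond_X : ∀ᵐ x ∂μ₀.snd,
      (μ'.map Prod.swap).condKernel x = (μ₀.map Prod.swap).condKernel x)
    -- (ii) P(X₀ | H₁ = h) = g h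
    (hcond_H : ∀ᵐ h ∂μ'.fst, μ'.condKernel h = g h) :
    μ₀.bind (fun p => (f p).bind (fun h' => (g h').map (fun x' => (h', x')))) = μ₀ := by
  -- abbreviations
  set G : H → Measure (H × X) := fun h' => (g h').map (fun x' => (h', x')) with hGdef
  set K : H × X → Measure (H × X) := fun p => G p.1 with hKdef
  set F : H × X → Measure (H × X) := fun p => (f p).map (fun h₁ => (h₁, p.2)) with hFdef
  have hG : Measurable G := by
    rw [Measure.measurable_measure]
    intro s hs
    simp_rw [hGdef, Measure.map_apply measurable_prodMk_left hs]
    exact Kernel.measurable_kernel_prodMk_left hs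
  have hK : Measurable K := hG.comp measurable_fst
  have hF : Measurable F := by
    rw [Measure.measurable_measure]
    intro s hs
    have : ∀ p : H × X, F p s = f p {h₁ | (p, h₁) ∈
        {q : (H × X) × H | (q.2, q.1.2) ∈ s}} := by
      intro p
      rw [hFdef]
      rw [Measure.map_apply measurable_prodMk_right hs]
      rfl
    simp_rw [this]
    exact Kernel.measurable_kernel_prodMk_left
      ((measurable_snd.prodMk (measurable_fst.snd)) hs)
  -- Step A : μ₀.bind T = μ'.bind K
  have hstepA : μ₀.bind (fun p => (f p).bind G) = μ'.bind K := by
    rw [hμ', Measure.bind_bind hF.aemeasurable hK.aemeasurable]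
    congr 1
    ext p : 1
    rw [hFdef]
    show (f p).bind G = ((f p).map (fun h₁ => (h₁, p.2))).bind K
    rw [bind_map_aux _ measurable_prodMk_right hK]
    rfl
  -- Step B : μ'.bind K = μ'.fst ⊗ₘ g
  have hstepB : μ'.bind K = μ'.fst ⊗ₘ g := by
    have : μ'.bind K = (μ'.map Prod.fst).bind G := by
      rw [bind_map_aux _ measurable_fst hG]; rfl
    rw [this]
    have hfst : μ'.map Prod.fst = μ'.fst := rfl
    rw [hfst, compProd_eq_bind_aux]
  -- Step C : μ'.fst ⊗ₘ g = μ'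
  have hstepC : μ'.fst ⊗ₘ g = μ' := by
    rw [← Measure.compProd_congr hcond_H]
    exact μ'.disintegrate μ'.condKernel
  -- Step D : μ' = μ₀
  have hswap : μ'.map Prod.swap = μ₀.map Prod.swap := by
    conv_lhs => rw [← (μ'.map Prod.swap).disintegrate (μ'.map Prod.swap).condKernel]
    conv_rhs => rw [← (μ₀.map Prod.swap).disintegrate (μ₀.map Prod.swap).condKernel]
    have hfst' : (μ'.map Prod.swap).fst = (μ₀.map Prod.swap).fst := by
      rw [Measure.fst_map_swap, Measure.fst_map_swap, hsnd]
    rw [hfst']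
    refine Measure.compProd_congr ?_
    rwa [Measure.fst_map_swap]
  have hD : μ' = μ₀ := by
    have := congrArg (fun ν => Measure.map Prod.swap ν) hswap
    simpa [Measure.map_map measurable_swap measurable_swap, Function.comp,
      Prod.swap_swap_eq] using this
  rw [hstepA, hstepB, hstepC, hD]
end

section
/- Let 𝒳 and ℋ be standard Borel spaces, f a Markov kernel from ℋ × 𝒳 to ℋ, g a Markov kernel from ℋ to 𝒳, μ₀ a probability measure on ℋ × 𝒳, and μ' = μ₀.bind (fun (h, x) => (f (h, x)).map (fun h₁ => (h₁, x))). Assume: (i) μ' and μ₀ have the same 𝒳-marginal and the disintegration of μ' over its 𝒳-marginal agrees almost everywhere with that of μ₀; (ii) the disintegration of μ' over its ℋ-marginal agrees almost everywhere with g. Let T be the kernel T (h, x) = (f (h, x)).bind (fun h' => (g h').map (fun x' => (h', x'))). Then for every natural number n, the n-fold iterate of the chain started from μ₀ has law μ₀ (i.e., applying μ ↦ μ.bind T to μ₀ n times yields μ₀); in particular, the 𝒳-marginal of the law of (H_n, X_n) equals the 𝒳-marginal of μ₀ for all n, so the stationary distribution of the chain has 𝒳-marginal equal to the law of X₀. 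-/
open MeasureTheory ProbabilityTheory

section Aux

variable {α β γ : Type*} [MeasurableSpace α] [MeasurableSpace β] [MeasurableSpace γ]

/-- bind of a map. -/
lemma aux_bind_map (m : Measure α) {f : α → β} (hf : Measurable f)
    {g : β → Measure γ} (hg : Measurable g) :
    (m.map f).bind g = m.bind (fun a => g (f a)) := by
  ext s hs
  rw [Measure.bind_apply hs hg.aemeasurable,
    Measure.bind_apply hs (show Measurable (fun a => g (f a)) from hg.comp hf).aemeasurable,
    lintegral_map (show Measurable (fun b => g b s) from (Measure.measurable_coe hs).comp hg) hf]

/-- a.e. congruence for bind. -/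
lemma aux_bind_congr (m : Measure α) {f g : α → Measure β}
    (hf : Measurable f) (hg : Measurable g) (h : f =ᵐ[m] g) :
    m.bind f = m.bind g := by
  ext s hs
  rw [Measure.bind_apply hs hf.aemeasurable, Measure.bind_apply hs hg.aemeasurable]
  refine lintegral_congr_ae ?_
  filter_upwards [h] with a ha using by rw [ha]

/-- Measurability of `a ↦ (κ a).map (fun b => φ (a, b))`. -/
lemma aux_measurable_map_kernel (κ : Kernel α β) [IsSFiniteKernel κ]
    {φ : α × β → γ} (hφ : Measurable φ) :
    Measurable (fun a => (κ a).map (fun b => φ (a, b))) := by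
  refine Measure.measurable_of_measurable_coe _ (fun s hs => ?_)
  have : (fun a => (κ a).map (fun b => φ (a, b)) s)
      = fun a => κ a (Prod.mk a ⁻¹' (φ ⁻¹' s)) := by
    funext a
    rw [Measure.map_apply (show Measurable (fun b => φ (a, b)) from
      hφ.comp measurable_prodMk_left) hs]
    rfl
  rw [this]
  exact Kernel.measurable_kernel_prodMk_left (hφ hs)

/-- compProd as a bind. -/
lemma aux_compProd_eq_bind (m : Measure α) [SFinite m] (κ : Kernel α β) [IsSFiniteKernel κ] :
    m ⊗ₘ κ = m.bind (fun a => (κ a).map (Prod.mk a)) := by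
  ext s hs
  rw [Measure.compProd_apply hs,
    Measure.bind_apply hs (show Measurable (fun a => (κ a).map (Prod.mk a)) from
      aux_measurable_map_kernel κ measurable_id).aemeasurable]
  refine lintegral_congr (fun a => ?_)
  rw [Measure.map_apply measurable_prodMk_left hs]

/-- Special case. -/
lemma aux_measurable_map_mk (κ : Kernel α β) [IsSFiniteKernel κ] :
    Measurable (fun a => (κ a).map (Prod.mk a)) :=
  aux_measurable_map_kernel κ (φ := id) measurable_id

end Aux

set_option maxHeartbeats 1000000 in
/-- **Theorem 2 of the paper:** `P(X_t = x, H_t = h) = P(X_0 = x, H_0 = h)` for all `t ≥ 0`.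
Under the GSN hypotheses (`P(H₁ | X₀) = P(H₀ | X₀)` and `P(X₀ | H₁ = h) = g h`),
the `n`-fold iterate of the chain started from `μ₀` has law `μ₀` for every `n`;
in particular the 𝒳-marginal of the law of `(H_n, X_n)` equals that of `μ₀`,
so the stationary distribution of the chain has 𝒳-marginal the law of `X₀`. -/
theorem gsn_iterate_law
    {H X : Type*}
    [MeasurableSpace H] [StandardBorelSpace H] [Nonempty H]
    [MeasurableSpace X] [StandardBorelSpace X] [Nonempty X]
    (f : Kernel (H × X) H) [IsMarkovKernel f]
    (g : Kernel H X) [IsMarkovKernel g]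
    (μ₀ : Measure (H × X)) [IsProbabilityMeasure μ₀]
    (μ' : Measure (H × X)) [IsProbabilityMeasure μ']
    (hμ' : μ' = μ₀.bind (fun p => (f p).map (fun h₁ => (h₁, p.2))))
    -- (i) same 𝒳-marginal and P(H₁ | X₀) = P(H₀ | X₀)
    (hsnd : μ'.snd = μ₀.snd)
    (hcond_X : ∀ᵐ x ∂μ₀.snd,
      (μ'.map Prod.swap).condKernel x = (μ₀.map Prod.swap).condKernel x)
    -- (ii) P(X₀ | H₁ = h) = g h
    (hcond_H : ∀ᵐ h ∂μ'.fst, μ'.condKernel h = g h)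
    (T : H × X → Measure (H × X))
    (hT : T = fun p => (f p).bind (fun h' => (g h').map (fun x' => (h', x')))) :
    ∀ n : ℕ, (fun μ : Measure (H × X) => μ.bind T)^[n] μ₀ = μ₀ ∧
      ((fun μ : Measure (H × X) => μ.bind T)^[n] μ₀).snd = μ₀.snd := by
  -- Step 0 : μ' = μ₀
  have hswap : μ'.map Prod.swap = μ₀.map Prod.swap := by
    have h1 : (μ'.map Prod.swap).fst = (μ₀.map Prod.swap).fst := by
      rw [Measure.fst_map_swap, Measure.fst_map_swap, hsnd]
    calc μ'.map Prod.swap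
        = (μ'.map Prod.swap).fst ⊗ₘ (μ'.map Prod.swap).condKernel :=
          (Measure.disintegrate _ _).symm
      _ = (μ₀.map Prod.swap).fst ⊗ₘ (μ₀.map Prod.swap).condKernel := by
          rw [h1]
          refine Measure.compProd_congr ?_
          rw [Measure.fst_map_swap]
          exact hcond_X
      _ = μ₀.map Prod.swap := Measure.disintegrate _ _
  have hμeq : μ' = μ₀ := by
    have := congrArg (Measure.map Prod.swap) hswap
    rwa [Measure.map_map measurable_swap measurable_swap,
      Measure.map_map measurable_swap measurable_swap, Prod.swap_swap_eq,
      Measure.map_id, Measure.map_id] at this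
  -- measurability facts
  have hS1 : Measurable (fun h : H => (g h).map (Prod.mk h)) :=
    aux_measurable_map_kernel g measurable_id
  have hS : Measurable (fun q : H × X => (g q.1).map (Prod.mk q.1)) :=
    hS1.comp measurable_fst
  have hκf : Measurable (fun p : H × X => (f p).map (fun h₁ => (h₁, p.2))) :=
    aux_measurable_map_kernel f (φ := fun q : (H × X) × H => (q.2, q.1.2)) (by fun_prop)
  -- Step 1 : μ₀.bind T = μ'.bind S
  have hstep1 : μ₀.bind T = μ'.bind (fun q : H × X => (g q.1).map (Prod.mk q.1)) := by
    rw [hμ', Measure.bind_bind hκf.aemeasurable hS.aemeasurable]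
    refine congrArg _ (funext fun p => ?_)
    rw [hT, aux_bind_map (f p) (f := fun h₁ => (h₁, p.2)) (by fun_prop) hS]
  -- Step 2 : μ'.bind S = μ'
  have hstep2 : μ'.bind (fun q : H × X => (g q.1).map (Prod.mk q.1)) = μ' := by
    have h2 : μ'.bind (fun q : H × X => (g q.1).map (Prod.mk q.1))
        = μ'.fst.bind (fun h => (g h).map (Prod.mk h)) := by
      rw [Measure.fst, aux_bind_map μ' measurable_fst hS1]
    have h3 : μ'.fst.bind (fun h => (g h).map (Prod.mk h)) = μ'.fst ⊗ₘ g :=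
      (aux_compProd_eq_bind μ'.fst g).symm
    have h4 : μ'.fst ⊗ₘ g = μ'.fst ⊗ₘ μ'.condKernel :=
      (Measure.compProd_congr hcond_H).symm
    rw [h2, h3, h4, Measure.disintegrate]
  have hone : μ₀.bind T = μ₀ := by rw [hstep1, hstep2, hμeq]
  intro n
  induction n with
  | zero => simp
  | succ n ih =>
    rw [Function.iterate_succ_apply', ih.1]
    exact ⟨hone, by rw [hone]⟩
end

section
/- Let ℋ and 𝒳 be standard Borel spaces, f a Markov kernel from ℋ × 𝒳 to ℋ, and g a Markov kernel from ℋ to 𝒳. Let ν be a probability measure on ℋ × 𝒳 whose disintegration over its ℋ-marginal agrees almost everywhere with g (i.e., the law of (H_t, X_t) with P(X_t | H_t) = g), and let the joint law of (H_t, H_{t+1}) be τ = ν.bind (fun (h, x) => (f (h, x)).map (fun h' => (h, h'))). Then the disintegration of τ over its first marginal agrees almost everywhere with the kernel κ : ℋ → measures on ℋ defined by κ h' = (g h').bind (fun x => f (h', x)); in particular, the transition kernel P(H_{t+1} | H_t = h') = ∫ f(h | h', x) g(x | h') dx is the same for every t, depending only on f and g. -/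
open MeasureTheory ProbabilityTheory

/-- **Homogeneity of the H-chain (step in the proof of Theorem 2 of the paper).**
If `ν = law (H_t, X_t)` satisfies `P(X_t | H_t = h) = g h` a.e., and
`τ = law (H_t, H_{t+1})` is obtained by applying the Markov kernel `f`, then the
disintegration of `τ` over its first marginal agrees a.e. with the kernel
`κ h' = (g h').bind (fun x => f (h', x))`, i.e. the transition kernel
`P(H_{t+1} | H_t = h') = ∫ f(h | h', x) g(x | h') dx` depends only on `f` and `g`. -/
theorem gsn_H_chain_homogeneous
    {H X : Type*}
    [MeasurableSpace H] [StandardBorelSpace H] [Nonempty H]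
    [MeasurableSpace X] [StandardBorelSpace X] [Nonempty X]
    (f : Kernel (H × X) H) [IsMarkovKernel f]
    (g : Kernel H X) [IsMarkovKernel g]
    (ν : Measure (H × X)) [IsProbabilityMeasure ν]
    (hν : ∀ᵐ h ∂ν.fst, ν.condKernel h = g h)
    (τ : Measure (H × H)) [IsProbabilityMeasure τ]
    (hτ : τ = ν.bind (fun p => (f p).map (fun h' => (p.1, h')))) :
    ∀ᵐ h' ∂τ.fst, τ.condKernel h' = (g h').bind (fun x => f (h', x)) := by
  -- the kernel packaging `h' ↦ (g h').bind (fun x => f (h', x))`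
  set κ : Kernel H H := f ∘ₖ (Kernel.id ×ₖ g) with hκdef
  have hκ_apply : ∀ h, κ h = (g h).bind (fun x => f (h, x)) := by
    intro h
    rw [hκdef, Kernel.comp_apply, Kernel.prod_apply, Kernel.id_apply,
      Measure.dirac_prod]
    have hfm : Measurable fun x : X => f (h, x) :=
      f.measurable.comp measurable_prodMk_left
    ext s hs
    rw [Measure.bind_apply hs f.measurable.aemeasurable,
      MeasureTheory.lintegral_map (f.measurable_coe hs) measurable_prodMk_left,
      Measure.bind_apply hs hfm.aemeasurable]
  -- the kernel packaging `p ↦ (f p).map (fun h' => (p.1, h'))`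
  set η : Kernel (H × X) (H × H) :=
    (Kernel.deterministic Prod.fst measurable_fst) ×ₖ f with hηdef
  have hη_apply : ∀ p : H × X, η p = (f p).map (fun h' => (p.1, h')) := by
    intro p
    rw [hηdef, Kernel.prod_apply, Kernel.deterministic_apply, Measure.dirac_prod]
  have hτ' : τ = ν.bind η := by
    rw [hτ]
    exact congrArg _ (funext fun p => (hη_apply p).symm)
  -- key step: `τ = ν.fst ⊗ₘ κ`
  have key : τ = ν.fst ⊗ₘ κ := by
    ext s hs
    rw [hτ', Measure.bind_apply hs η.measurable.aemeasurable, Measure.compProd_apply hs]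
    conv_lhs => rw [← Measure.disintegrate ν ν.condKernel,
      Measure.lintegral_compProd (η.measurable_coe hs)]
    refine lintegral_congr_ae ?_
    filter_upwards [hν] with h hh
    have hfm : Measurable fun x : X => f (h, x) :=
      f.measurable.comp measurable_prodMk_left
    rw [hh, hκ_apply h,
      Measure.bind_apply (hs.preimage measurable_prodMk_left) hfm.aemeasurable]
    refine lintegral_congr fun x => ?_
    rw [hη_apply (h, x)]
    exact Measure.map_apply measurable_prodMk_left hs
  have hfst : τ.fst = ν.fst := by rw [key, Measure.fst_compProd]
  have := ProbabilityTheory.eq_condKernel_of_measure_eq_compProd κ (by rw [hfst]; exact key)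
  filter_upwards [this, hfst ▸ hν] with h h1 _
  rw [← h1, hκ_apply h]
end

section
/- Let S be a nonempty finite metric space, let ε > 0, and let T : S → S → ℝ be a row-stochastic matrix (T a b ≥ 0 for all a, b, and Σ_b T a b = 1 for all a) such that T a b > 0 whenever dist a b ≤ ε. Suppose that any two points of S are connected by an ε-chain: for all a, b ∈ S there exist points x₀ = a, x₁, …, x_k = b in S with dist x_i x_{i+1} ≤ ε for every i < k. Then T is primitive: there exists N such that for all n ≥ N and all a, b ∈ S, (T^n) a b > 0; in particular the Markov chain defined by T is irreducible and aperiodic (ergodic). -/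
open Matrix

/-- **Finite-state formulation of Corollary 2 of the paper.** Let `S` be a nonempty
finite metric space, `ε > 0`, and `T` a row-stochastic matrix on `S` with
`T a b > 0` whenever `dist a b ≤ ε`. If any two points of `S` are connected by an
`ε`-chain, then `T` is primitive: there is `N` such that `(T^n) a b > 0` for all
`n ≥ N` and all `a, b`; in particular the chain is irreducible and aperiodic. -/
theorem local_noise_chain_primitive
    {S : Type*} [Fintype S] [Nonempty S] [DecidableEq S] [MetricSpace S]
    (ε : ℝ) (hε : 0 < ε)
    (T : Matrix S S ℝ)
    (hTnonneg : ∀ a b, 0 ≤ T a b)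
    (hTrow : ∀ a, ∑ b, T a b = 1)
    (hTpos : ∀ a b, dist a b ≤ ε → 0 < T a b)
    (hchain : ∀ a b : S, ∃ (k : ℕ) (x : ℕ → S), x 0 = a ∧ x k = b ∧
      ∀ i < k, dist (x i) (x (i + 1)) ≤ ε) :
    ∃ N, ∀ n ≥ N, ∀ a b, 0 < (T ^ n) a b := by
  -- powers have nonneg entries
  have hpownn : ∀ n, ∀ a b : S, 0 ≤ (T ^ n) a b := by
    intro n
    induction n with
    | zero => intro a b; by_cases h : a = b <;> simp [Matrix.one_apply, h]
    | succ n ih =>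
      intro a b
      rw [pow_succ, Matrix.mul_apply]
      exact Finset.sum_nonneg fun c _ => mul_nonneg (ih a c) (hTnonneg c b)
  -- step: positivity propagates along ε-steps
  have hstep : ∀ n (a b c : S), 0 < (T ^ n) a b → dist b c ≤ ε →
      0 < (T ^ (n + 1)) a c := by
    intro n a b c hab hbc
    rw [pow_succ, Matrix.mul_apply]
    refine Finset.sum_pos' (fun d _ => mul_nonneg (hpownn n a d) (hTnonneg d c)) ?_
    exact ⟨b, Finset.mem_univ b, mul_pos hab (hTpos b c hbc)⟩
  -- monotone in n
  have hmono : ∀ n (a b : S), 0 < (T ^ n) a b → ∀ m ≥ n, 0 < (T ^ m) a b := by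
    intro n a b h m hm
    induction m with
    | zero => simpa [Nat.le_zero.mp hm] using h
    | succ m ih =>
      rcases Nat.lt_or_ge n (m + 1) with hlt | hge
      · exact hstep m a b b (ih (Nat.lt_succ_iff.mp hlt)) (by simp [hε.le])
      · have : n = m + 1 := le_antisymm hm hge
        simpa [this] using h
  -- for each pair there's some n with positivity
  have hex : ∀ p : S × S, ∃ n, 0 < (T ^ n) p.1 p.2 := by
    rintro ⟨a, b⟩
    obtain ⟨k, x, hx0, hxk, hd⟩ := hchain a b
    suffices h : ∀ i ≤ k, 0 < (T ^ i) a (x i) by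
      exact ⟨k, hxk ▸ h k le_rfl⟩
    intro i hi
    induction i with
    | zero => simp [hx0, Matrix.one_apply]
    | succ i ih =>
      exact hstep i a (x i) (x (i + 1)) (ih (Nat.le_of_succ_le hi))
        (hd i (Nat.lt_of_succ_le hi))
  choose f hf using hex
  refine ⟨Finset.univ.sup f, fun n hn a b => ?_⟩
  exact hmono (f (a, b)) a b (hf (a, b)) n
    (le_trans (Finset.le_sup (Finset.mem_univ (a, b))) hn)
end

section
/- Let 𝒳 and 𝒳̃ be standard Borel spaces, let P be a probability measure on 𝒳 (the data-generating distribution), and let C be a Markov kernel from 𝒳 to 𝒳̃ (the corruption distribution C(X̃ | X)). Let J be the joint law on 𝒳 × 𝒳̃ of (X, X̃) with X ~ P and X̃ | X ~ C, and let D be a Markov kernel from 𝒳̃ to 𝒳 that disintegrates J over its 𝒳̃-marginal (the exact Bayes posterior P(X | X̃)). Then P is invariant under the corrupt-then-denoise Markov transition: P.bind (fun x => (C x).bind D) = P. -/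
open MeasureTheory ProbabilityTheory

/-- **Exact-model core of Theorem 1 of the paper (consistency of generative
denoising autoencoders).** Let `P` be the data-generating distribution on a
standard Borel space `𝒳`, `C` a Markov corruption kernel from `𝒳` to `𝒳̃`, `J` the
joint law of `(X, X̃)` with `X ~ P`, `X̃ | X ~ C`, and `D` a Markov kernel from `𝒳̃`
to `𝒳` disintegrating `J` over its `𝒳̃`-marginal (the exact Bayes posterior
`P(X | X̃)`). Then `P` is invariant under the corrupt-then-denoise transition. -/
theorem dae_stationary
    {X Xt : Type*}
    [MeasurableSpace X] [StandardBorelSpace X] [Nonempty X]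
    [MeasurableSpace Xt] [StandardBorelSpace Xt] [Nonempty Xt]
    (P : Measure X) [IsProbabilityMeasure P]
    (C : Kernel X Xt) [IsMarkovKernel C]
    (J : Measure (X × Xt)) [IsProbabilityMeasure J]
    (hJ : J = P.bind (fun x => (C x).map (fun xt => (x, xt))))
    (D : Kernel Xt X) [IsMarkovKernel D]
    (hD : J.map Prod.swap = J.snd ⊗ₘ D) :
    P.bind (fun x => (C x).bind (fun xt => D xt)) = P := by
  have hmap : (fun x => (C x).map (fun xt => (x, xt)))
      = fun x => ((Kernel.id ×ₖ C) x : Measure (X × Xt)) := by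
    funext x
    rw [Kernel.prod_apply, Kernel.id, Kernel.deterministic_apply, Measure.dirac_prod]
    rfl
  have hm : Measurable (fun x => ((C x).map (fun xt => (x, xt)) : Measure (X × Xt))) := by
    rw [hmap]; exact (Kernel.id ×ₖ C).measurable
  have hfst : J.fst = P := by
    ext s hs
    rw [Measure.fst_apply hs, hJ, Measure.bind_apply (measurable_fst hs) hm.aemeasurable]
    have heq : ∀ x, (C x).map (fun xt => (x, xt)) (Prod.fst ⁻¹' s)
        = s.indicator (fun _ => 1) x := by
      intro x
      rw [Measure.map_apply measurable_prodMk_left (measurable_fst hs)]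
      by_cases hx : x ∈ s
      · have : (fun xt : Xt => (x, xt)) ⁻¹' (Prod.fst ⁻¹' s) = Set.univ := by
          ext xt; simp [hx]
        simp [this, hx]
      · have : (fun xt : Xt => (x, xt)) ⁻¹' (Prod.fst ⁻¹' s) = ∅ := by
          ext xt; simp [hx]
        simp [this, hx]
    simp_rw [heq]
    rw [lintegral_indicator hs]
    simp
  have hsnd : J.snd = P.bind (fun x => (C x : Measure Xt)) := by
    ext s hs
    rw [Measure.snd_apply hs, hJ, Measure.bind_apply (measurable_snd hs) hm.aemeasurable,
      Measure.bind_apply hs C.measurable.aemeasurable]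
    refine lintegral_congr fun x => ?_
    rw [Measure.map_apply measurable_prodMk_left (measurable_snd hs)]
    rfl
  have hsndD : (J.snd ⊗ₘ D).snd = (J.snd).bind (fun xt => (D xt : Measure X)) := by
    ext s hs
    rw [Measure.snd_apply hs, Measure.compProd_apply (measurable_snd hs),
      Measure.bind_apply hs D.measurable.aemeasurable]
    rfl
  calc P.bind (fun x => (C x).bind (fun xt => D xt))
      = (P.bind (fun x => (C x : Measure Xt))).bind (fun xt => (D xt : Measure X)) :=
        (Measure.bind_bind C.measurable.aemeasurable D.measurable.aemeasurable).symm
    _ = (J.snd).bind (fun xt => (D xt : Measure X)) := by rw [hsnd]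
    _ = (J.snd ⊗ₘ D).snd := hsndD.symm
    _ = (J.map Prod.swap).snd := by rw [hD]
    _ = J.fst := Measure.snd_map_swap
    _ = P := hfst
end

section
/- Let A, B, ℋ be nonempty finite types, let p : A × B → ℝ be a probability mass function with full support (p (a, b) > 0 for all (a, b), Σ p = 1), and let C : A × B → ℋ → ℝ be a corruption transition matrix (C (a,b) h ≥ 0, Σ_h C (a,b) h = 1). Define the joint q (a, b, h) = p (a, b) · C (a, b) h, and fix b ∈ B. Define the clamped transition matrix K_b : A → A → ℝ by K_b a a' = Σ_h C (a, b) h · q (a', b, h) / (Σ_{a''} q (a'', b, h)), where the summand is taken to be 0 when C (a, b) h = 0. Then the conditional distribution π_b a = p (a, b) / (Σ_{a'} p (a', b)) is a stationary distribution of K_b: Σ_a π_b a · K_b a a' = π_b a' for all a' ∈ A. -/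
/-- **Proposition 1 of the paper (handling missing inputs / structured outputs by
clamping), finite-state version.** Let `p` be a full-support pmf on `A × B`, `C` a
corruption transition matrix from `A × B` to `ℋ`, and `q (a, b, h) = p (a, b) * C (a, b) h`
the joint. Fix `b : B` and let the clamped transition matrix be
`K a a' = Σ_h C (a, b) h * q (a', b, h) / (Σ_{a''} q (a'', b, h))`
(the summand being `0` when `C (a, b) h = 0`; note that in that degenerate case the
Lean convention `x / 0 = 0` also applies). Then the conditional distribution
`π a = p (a, b) / (Σ_{a'} p (a', b))` is a stationary distribution of `K`. -/
theorem clamped_chain_stationary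
    {A B H : Type*}
    [Fintype A] [Nonempty A] [Fintype B] [Nonempty B] [Fintype H] [Nonempty H]
    (p : A × B → ℝ)
    (hp : ∀ ab, 0 < p ab) (hpsum : ∑ ab, p ab = 1)
    (C : A × B → H → ℝ)
    (hC : ∀ ab h, 0 ≤ C ab h) (hCrow : ∀ ab, ∑ h, C ab h = 1)
    (q : A × B × H → ℝ)
    (hq : q = fun z => p (z.1, z.2.1) * C (z.1, z.2.1) z.2.2)
    (b : B)
    (K : A → A → ℝ)
    (hK : K = fun a a' => ∑ h, C (a, b) h * (q (a', b, h) / ∑ a'', q (a'', b, h)))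
    (π : A → ℝ)
    (hπ : π = fun a => p (a, b) / ∑ a', p (a', b)) :
    ∀ a', ∑ a, π a * K a a' = π a' := by

  subst hq hK hπ
  intro a'
  simp only
  set Z : ℝ := ∑ a'', p (a'', b) with hZ
  have hZpos : 0 < Z := Finset.sum_pos (fun a _ => hp _) Finset.univ_nonempty
  have key : ∀ h : H, ∑ a, p (a, b) / Z *
      (C (a, b) h * (p (a', b) * C (a', b) h / ∑ a'', p (a'', b) * C (a'', b) h))
      = p (a', b) * C (a', b) h / Z := by
    intro h
    set D : ℝ := ∑ a'', p (a'', b) * C (a'', b) h with hD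
    by_cases hD0 : D = 0
    · have hzero : ∀ a'' ∈ Finset.univ, p (a'', b) * C (a'', b) h = 0 := by
        intro a'' _
        exact (Finset.sum_eq_zero_iff_of_nonneg
          (fun a _ => mul_nonneg (hp _).le (hC _ _))).mp hD0 a'' (Finset.mem_univ _)
      have h1 : p (a', b) * C (a', b) h = 0 := hzero a' (Finset.mem_univ _)
      rw [h1]
      simp
    · have hstep : ∑ a, p (a, b) / Z *
          (C (a, b) h * (p (a', b) * C (a', b) h / D))
          = (∑ a, p (a, b) * C (a, b) h) * (p (a', b) * C (a', b) h / (Z * D)) := by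
        rw [Finset.sum_mul]
        refine Finset.sum_congr rfl fun a _ => ?_
        field_simp
      rw [hstep, ← hD]
      field_simp
  simp only [Finset.mul_sum]
  rw [Finset.sum_comm]
  calc (∑ h, ∑ a, p (a, b) / Z *
        (C (a, b) h * (p (a', b) * C (a', b) h / ∑ a'', p (a'', b) * C (a'', b) h)))
      = ∑ h, p (a', b) * C (a', b) h / Z := Finset.sum_congr rfl fun h _ => key h
    _ = p (a', b) / Z := by
        rw [← Finset.sum_div]
        rw [← Finset.mul_sum, hCrow, mul_one]
end

section
/- Let I be a nonempty finite index type, for each i ∈ I let S_i be a nonempty finite type, let X = Π_{i ∈ I} S_i, and let p : X → ℝ be a probability mass function with full support (p x > 0 for all x, Σ p = 1). Define the random-scan Gibbs transition matrix K : X → X → ℝ by K x y = (1 / |I|) · Σ_{i ∈ I} [y agrees with x off coordinate i] · p y / (Σ_{z : X, z agrees with x off coordinate i} p z). Then K is primitive (there exists N such that (K^n) x y > 0 for all n ≥ N and all x, y ∈ X), and p is the unique stationary distribution of K. -/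
set_option linter.unusedSectionVars false
open Matrix

section GibbsAux

variable {I : Type*} [Fintype I] [Nonempty I] [DecidableEq I]
    {S : I → Type*} [∀ i, Fintype (S i)] [∀ i, Nonempty (S i)] [∀ i, DecidableEq (S i)]

/-- normalizing constant of the conditional at coordinate `i` given `x` off `i`. -/
noncomputable def gibbsD (p : (∀ i, S i) → ℝ) (x : ∀ i, S i) (i : I) : ℝ :=
  ∑ z ∈ Finset.univ.filter (fun z : ∀ i, S i => ∀ j, j ≠ i → z j = x j), p z

/-- the random-scan Gibbs kernel. -/
noncomputable def gibbsK (p : (∀ i, S i) → ℝ) : Matrix (∀ i, S i) (∀ i, S i) ℝ :=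
  Matrix.of fun x y => (Fintype.card I : ℝ)⁻¹ *
    ∑ i, if ∀ j, j ≠ i → y j = x j then p y / gibbsD p x i else 0

variable (p : (∀ i, S i) → ℝ) (hp : ∀ x, 0 < p x)

include hp

lemma gibbsD_pos (x : ∀ i, S i) (i : I) : 0 < gibbsD p x i := by
  apply Finset.sum_pos (fun z _ => hp z)
  exact ⟨x, by simp⟩

lemma gibbsK_nonneg (x y : ∀ i, S i) : 0 ≤ gibbsK p x y := by
  have hcI : (0:ℝ) < (Fintype.card I : ℝ) := by exact_mod_cast Fintype.card_pos
  apply mul_nonneg (by positivity)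
  apply Finset.sum_nonneg
  intro i _
  split
  · exact le_of_lt (div_pos (hp y) (gibbsD_pos p hp x i))
  · exact le_refl 0

lemma gibbsK_pos (x y : ∀ i, S i) (i : I) (hi : ∀ j, j ≠ i → y j = x j) :
    0 < gibbsK p x y := by
  have hcI : (0:ℝ) < (Fintype.card I : ℝ) := by exact_mod_cast Fintype.card_pos
  apply mul_pos (by positivity)
  apply Finset.sum_pos'
  · intro k _
    split
    · exact le_of_lt (div_pos (hp y) (gibbsD_pos p hp x k))
    · exact le_refl 0
  · refine ⟨i, Finset.mem_univ i, ?_⟩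
    rw [if_pos hi]
    exact div_pos (hp y) (gibbsD_pos p hp x i)

lemma gibbsK_pow_nonneg (n : ℕ) (x y : ∀ i, S i) : 0 ≤ (gibbsK p ^ n) x y := by
  induction n generalizing x y with
  | zero => rw [pow_zero, Matrix.one_apply]; split <;> norm_num
  | succ n ih =>
    rw [pow_succ, Matrix.mul_apply]
    exact Finset.sum_nonneg fun z _ => mul_nonneg (ih x z) (gibbsK_nonneg p hp z y)

lemma gibbsK_pow_diag_pos (n : ℕ) (x : ∀ i, S i) : 0 < (gibbsK p ^ n) x x := by
  induction n with
  | zero => rw [pow_zero, Matrix.one_apply_eq]; norm_num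
  | succ n ih =>
    rw [pow_succ, Matrix.mul_apply]
    apply Finset.sum_pos'
    · intro z _; exact mul_nonneg (gibbsK_pow_nonneg p hp n x z) (gibbsK_nonneg p hp z x)
    · exact ⟨x, Finset.mem_univ x,
        mul_pos ih (gibbsK_pos p hp x x (Classical.arbitrary I) (fun j _ => rfl))⟩

lemma gibbsK_reach (s : Finset I) : ∀ x y : ∀ i, S i, (∀ j, j ∉ s → y j = x j) →
    0 < (gibbsK p ^ s.card) x y := by
  induction s using Finset.induction_on with
  | empty =>
    intro x y h
    have : y = x := funext fun j => h j (by simp)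
    subst this
    rw [Finset.card_empty, pow_zero, Matrix.one_apply_eq]; norm_num
  | @insert i s hins ih =>
    intro x y h
    rw [Finset.card_insert_of_notMem hins, pow_succ', Matrix.mul_apply]
    apply Finset.sum_pos'
    · intro z _; exact mul_nonneg (gibbsK_nonneg p hp x z) (gibbsK_pow_nonneg p hp _ z y)
    · refine ⟨Function.update x i (y i), Finset.mem_univ _, mul_pos ?_ (ih _ _ ?_)⟩
      · exact gibbsK_pos p hp x _ i (fun j hj => Function.update_of_ne hj _ _)
      · intro j hj
        by_cases hji : j = i
        · subst hji; simp
        · rw [Function.update_of_ne hji]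
          exact h j (by simp [hji, hj])

lemma gibbsK_pow_card_pos (x y : ∀ i, S i) : 0 < (gibbsK p ^ Fintype.card I) x y := by
  have := gibbsK_reach p hp Finset.univ x y (fun j hj => absurd (Finset.mem_univ j) hj)
  rwa [Finset.card_univ] at this

lemma gibbsD_congr (i : I) (x y : ∀ i, S i) (hxy : ∀ j, j ≠ i → y j = x j) :
    gibbsD p x i = gibbsD p y i := by
  unfold gibbsD
  congr 1
  apply Finset.filter_congr
  intro z _
  constructor
  · intro h j hj; rw [h j hj, ← hxy j hj]
  · intro h j hj; rw [h j hj, hxy j hj]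

lemma gibbsK_stationary (y : ∀ i, S i) : ∑ x, p x * gibbsK p x y = p y := by
  have hcI : (0:ℝ) < (Fintype.card I : ℝ) := by exact_mod_cast Fintype.card_pos
  have key : ∀ i : I,
      (∑ x : ∀ i, S i, if ∀ j, j ≠ i → y j = x j then p x * (p y / gibbsD p x i) else 0)
        = p y := by
    intro i
    rw [← Finset.sum_filter]
    have hfe : ∀ x ∈ Finset.univ.filter (fun x : ∀ i, S i => ∀ j, j ≠ i → y j = x j),
        p x * (p y / gibbsD p x i) = p x * (p y / gibbsD p y i) := by
      intro x hx
      simp only [Finset.mem_filter] at hx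
      rw [gibbsD_congr p hp i x y hx.2]
    rw [Finset.sum_congr rfl hfe, ← Finset.sum_mul]
    have hDs : ∑ x ∈ Finset.univ.filter (fun x : ∀ i, S i => ∀ j, j ≠ i → y j = x j), p x
        = gibbsD p y i := by
      unfold gibbsD
      congr 1
      apply Finset.filter_congr
      intro z _
      constructor
      · intro h j hj; exact (h j hj).symm
      · intro h j hj; exact (h j hj).symm
    rw [hDs]
    rw [mul_comm]
    exact div_mul_cancel₀ (p y) (ne_of_gt (gibbsD_pos p hp y i))
  calc ∑ x, p x * gibbsK p x y
      = (Fintype.card I : ℝ)⁻¹ * ∑ x : ∀ i, S i, ∑ i : I,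
          (if ∀ j, j ≠ i → y j = x j then p x * (p y / gibbsD p x i) else 0) := by
        rw [Finset.mul_sum]
        apply Finset.sum_congr rfl
        intro x _
        unfold gibbsK
        simp only [Matrix.of_apply]
        rw [mul_left_comm]
        congr 1
        rw [Finset.mul_sum]
        exact Finset.sum_congr rfl fun i _ => by rw [mul_ite, mul_zero]
    _ = (Fintype.card I : ℝ)⁻¹ * ∑ i : I,
          (∑ x : ∀ i, S i, if ∀ j, j ≠ i → y j = x j then p x * (p y / gibbsD p x i) else 0) := by
        rw [Finset.sum_comm]
    _ = p y := by
        simp only [key, Finset.sum_const, Finset.card_univ, nsmul_eq_mul]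
        rw [← mul_assoc, inv_mul_cancel₀ (ne_of_gt hcI), one_mul]

lemma gibbsK_iter (v : (∀ i, S i) → ℝ) (hv : ∀ y, ∑ x, v x * gibbsK p x y = v y)
    (n : ℕ) (y : ∀ i, S i) : ∑ x, v x * (gibbsK p ^ n) x y = v y := by
  induction n generalizing y with
  | zero => simp [Matrix.one_apply]
  | succ n ih =>
    rw [pow_succ]
    calc ∑ x, v x * (gibbsK p ^ n * gibbsK p) x y
        = ∑ z, (∑ x, v x * (gibbsK p ^ n) x z) * gibbsK p z y := by
          simp only [Matrix.mul_apply, Finset.mul_sum, Finset.sum_mul]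
          rw [Finset.sum_comm]
          congr 1; ext z; congr 1; ext x; ring
      _ = v y := by simp only [ih]; exact hv y

end GibbsAux

/-- **Ergodicity/consistency part of Proposition 2 of the paper.** The random-scan
Gibbs transition matrix `K` associated with a full-support pmf `p` on `X = Π i, S i`
(pick a coordinate `i` uniformly at random, resample it from the conditional
`p(X_i = y_i | X_{-i} = x_{-i})`) is primitive, and `p` is its unique stationary
distribution. -/
theorem random_scan_gibbs_primitive_unique_stationary
    {I : Type*} [Fintype I] [Nonempty I] [DecidableEq I]
    {S : I → Type*} [∀ i, Fintype (S i)] [∀ i, Nonempty (S i)] [∀ i, DecidableEq (S i)]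
    (p : (∀ i, S i) → ℝ)
    (hp : ∀ x, 0 < p x) (hpsum : ∑ x, p x = 1)
    (K : Matrix (∀ i, S i) (∀ i, S i) ℝ)
    (hK : K = Matrix.of fun x y => (Fintype.card I : ℝ)⁻¹ *
      ∑ i, if ∀ j, j ≠ i → y j = x j then
          p y / ∑ z ∈ Finset.univ.filter (fun z : ∀ i, S i => ∀ j, j ≠ i → z j = x j), p z
        else 0) :
    (∃ N, ∀ n ≥ N, ∀ x y, 0 < (K ^ n) x y) ∧
    (∀ y, ∑ x, p x * K x y = p y) ∧
    (∀ π : (∀ i, S i) → ℝ, (∀ x, 0 ≤ π x) → (∑ x, π x = 1) →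
      (∀ y, ∑ x, π x * K x y = π y) → π = p) := by
  have hKg : K = gibbsK p := hK
  subst hKg
  refine ⟨⟨Fintype.card I, ?_⟩, gibbsK_stationary p hp, ?_⟩
  · intro n hn x y
    obtain ⟨m, rfl⟩ := Nat.exists_eq_add_of_le hn
    rw [pow_add, Matrix.mul_apply]
    apply Finset.sum_pos'
    · intro z _; exact mul_nonneg (gibbsK_pow_nonneg p hp _ x z) (gibbsK_pow_nonneg p hp _ z y)
    · exact ⟨y, Finset.mem_univ y,
        mul_pos (gibbsK_pow_card_pos p hp x y) (gibbsK_pow_diag_pos p hp m y)⟩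
  · intro π hπ0 hπ1 hπstat
    set N := Fintype.card I with hN
    have hπN : ∀ y, ∑ x, π x * (gibbsK p ^ N) x y = π y := gibbsK_iter p hp π hπstat N
    have hpN : ∀ y, ∑ x, p x * (gibbsK p ^ N) x y = p y :=
      gibbsK_iter p hp p (gibbsK_stationary p hp) N
    obtain ⟨x0, _, hx0⟩ := Finset.exists_max_image Finset.univ (fun x => π x / p x)
      Finset.univ_nonempty
    set c := π x0 / p x0 with hc
    have hle : ∀ x, π x ≤ c * p x := by
      intro x
      have h := hx0 x (Finset.mem_univ x)
      rw [div_le_iff₀ (hp x)] at h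
      simpa [hc, mul_comm] using h
    have hzero : ∑ x, (c * p x - π x) * (gibbsK p ^ N) x x0 = 0 := by
      have : ∑ x, (c * p x - π x) * (gibbsK p ^ N) x x0
          = c * (∑ x, p x * (gibbsK p ^ N) x x0) - ∑ x, π x * (gibbsK p ^ N) x x0 := by
        rw [Finset.mul_sum, ← Finset.sum_sub_distrib]
        congr 1; ext x; ring
      rw [this, hpN x0, hπN x0, hc, div_mul_cancel₀ _ (ne_of_gt (hp x0)), sub_self]
    have hall : ∀ x, c * p x = π x := by
      intro x
      have h1 : ∀ z ∈ Finset.univ, (0:ℝ) ≤ (c * p z - π z) * (gibbsK p ^ N) z x0 := by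
        intro z _
        exact mul_nonneg (by linarith [hle z]) (le_of_lt (gibbsK_pow_card_pos p hp z x0))
      have h2 := (Finset.sum_eq_zero_iff_of_nonneg h1).mp hzero x (Finset.mem_univ x)
      rcases mul_eq_zero.mp h2 with h | h
      · linarith
      · exact absurd h (ne_of_gt (gibbsK_pow_card_pos p hp x x0))
    have hc1 : c = 1 := by
      have h3 : ∑ x, c * p x = ∑ x, π x := Finset.sum_congr rfl (fun x _ => hall x)
      rwa [← Finset.mul_sum, hpsum, hπ1, mul_one] at h3
    funext x
    have := hall x
    rw [hc1, one_mul] at this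
    exact this.symm
end
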